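/- For every integer k ≥ 0 the following holds in ℚ⟦q⟧: ∑_{m≥0} q^m · (∏_{i=0}^{m+k−1}(1+q^i)) · (∏_{i=0}^{m−1}(1+q^i)) · (∏_{i=1}^{m+k}(1−q^i))^{−1} · (∏_{i=1}^{m}(1−q^i))^{−1} = 2(1+q^k)^{−1} · ∏_{i≥1}(1+q^i)² · ∏_{i≥1}(1−q^i)^{−2}. The left-hand sum converges coefficientwise since its m-th summand lies in q^m ℚ⟦q⟧. -/

import Mathlib

/-!
Statement 17: the q-Gauss summation instance in ℚ⟦q⟧: for k ≥ 0,
∑_{m≥0} q^m (∏_{i=0}^{m+k−1}(1+q^i)) (∏_{i=0}^{m−1}(1+q^i))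
        (∏_{i=1}^{m+k}(1−q^i))^{−1} (∏_{i=1}^{m}(1−q^i))^{−1}
  = 2(1+q^k)^{−1} ∏_{i≥1}(1+q^i)² ∏_{i≥1}(1−q^i)^{−2}.
-/

open PowerSeries

namespace Stmt17

/-- Coefficientwise convergence of an infinite series of formal power series over ℚ. -/
def CoeffwiseSum (f : ℕ → PowerSeries ℚ) (g : PowerSeries ℚ) : Prop :=
  ∀ n : ℕ, ∀ᶠ N in Filter.atTop,
    PowerSeries.coeff (R := ℚ) n (∑ k ∈ Finset.range N, f k) = PowerSeries.coeff (R := ℚ) n g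

/-- Coefficientwise convergence of an infinite product of formal power series over ℚ. -/
def CoeffwiseProd (f : ℕ → PowerSeries ℚ) (g : PowerSeries ℚ) : Prop :=
  ∀ n : ℕ, ∀ᶠ N in Filter.atTop,
    PowerSeries.coeff (R := ℚ) n (∏ k ∈ Finset.range N, f k) = PowerSeries.coeff (R := ℚ) n g

/-- The `m`-th summand of the q-Gauss sum. -/
noncomputable def summand (k m : ℕ) : PowerSeries ℚ :=
  X ^ m * (∏ i ∈ Finset.range (m + k), (1 + X ^ i)) *
    (∏ i ∈ Finset.range m, (1 + X ^ i)) *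
    (∏ i ∈ Finset.Icc 1 (m + k), (1 - X ^ i : PowerSeries ℚ))⁻¹ *
    (∏ i ∈ Finset.Icc 1 m, (1 - X ^ i : PowerSeries ℚ))⁻¹

noncomputable abbrev KK := FractionRing (PowerSeries ℚ)
noncomputable def ι : PowerSeries ℚ →+* KK := algebraMap _ _
lemma ι_inj : Function.Injective ι := IsFractionRing.injective _ _
lemma ι_inv (f : PowerSeries ℚ) (hf : constantCoeff (R := ℚ) f ≠ 0) : ι f⁻¹ = (ι f)⁻¹ := by
  have h : f * f⁻¹ = 1 := PowerSeries.mul_inv_cancel f hf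
  have h2 : ι f * ι f⁻¹ = 1 := by rw [← map_mul, h, map_one]
  exact eq_inv_of_mul_eq_one_left (by rw [mul_comm] at h2; exact h2)
lemma ι_ne (f : PowerSeries ℚ) (hf : constantCoeff (R := ℚ) f ≠ 0) : ι f ≠ 0 := by
  intro h
  apply hf
  have : f = 0 := ι_inj (by simpa using h)
  simp [this]

noncomputable def Pp (M : ℕ) : PowerSeries ℚ := ∏ i ∈ Finset.range M, (1 + X ^ i)
noncomputable def Qm (M : ℕ) : PowerSeries ℚ := ∏ i ∈ Finset.Icc 1 M, (1 - X ^ i)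
noncomputable def Bq (M : ℕ) : PowerSeries ℚ := ∏ i ∈ Finset.Icc 1 M, (1 + X ^ i)

lemma constQ (M : ℕ) : constantCoeff (R := ℚ) (Qm M) = 1 := by
  unfold Qm
  rw [map_prod]
  apply Finset.prod_eq_one
  intro i hi
  simp only [Finset.mem_Icc] at hi
  rw [map_sub, map_one, map_pow, constantCoeff_X, zero_pow (by omega), sub_zero]

lemma constQ_ne (M : ℕ) : constantCoeff (R := ℚ) (Qm M) ≠ 0 := by rw [constQ]; norm_num

lemma const_onePlus (j : ℕ) : constantCoeff (R := ℚ) (1 + X ^ j : PowerSeries ℚ) ≠ 0 := by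
  rcases Nat.eq_zero_or_pos j with h | h
  · subst h; simp
  · rw [map_add, map_one, map_pow, constantCoeff_X, zero_pow (by omega), add_zero]; norm_num

lemma Qm_succ (M : ℕ) : Qm (M + 1) = Qm M * (1 - X ^ (M + 1)) := by
  unfold Qm
  rw [← Finset.prod_Icc_succ_top (by omega)]

lemma Bq_succ (M : ℕ) : Bq (M + 1) = Bq M * (1 + X ^ (M + 1)) := by
  unfold Bq
  rw [← Finset.prod_Icc_succ_top (by omega)]

lemma Pp_succ (M : ℕ) : Pp (M + 1) = Pp M * (1 + X ^ M) := Finset.prod_range_succ _ _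

lemma Pp_eq_two_Bq (M : ℕ) : Pp (M + 1) = 2 * Bq M := by
  induction M with
  | zero => simp [Pp, Bq]; norm_num
  | succ M ih => rw [Pp_succ, ih, Bq_succ]; ring

lemma const_oneMinus (j : ℕ) (hj : 1 ≤ j) : constantCoeff (R := ℚ) (1 - X ^ j : PowerSeries ℚ) ≠ 0 := by
  rw [map_sub, map_one, map_pow, constantCoeff_X, zero_pow (by omega), sub_zero]; norm_num

lemma qbinom (n : ℕ) : ∑ m ∈ Finset.range (n+1), X ^ m * Pp m * (Qm m)⁻¹ = Bq n * (Qm n)⁻¹ := by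
  induction n with
  | zero => simp [Pp, Qm, Bq]
  | succ n ih =>
    rw [Finset.sum_range_succ, ih]
    apply ι_inj
    rw [map_add, map_mul, map_mul, map_mul, map_mul, map_pow,
      ι_inv _ (constQ_ne n), ι_inv _ (constQ_ne (n+1))]
    have hQ : ι (Qm (n+1)) = ι (Qm n) * ι (1 - X ^ (n+1)) := by rw [← map_mul, ← Qm_succ]
    have hB : ι (Bq (n+1)) = ι (Bq n) * ι (1 + X ^ (n+1)) := by rw [← map_mul, ← Bq_succ]
    have hP : ι (Pp (n+1)) = 2 * ι (Bq n) := by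
      rw [Pp_eq_two_Bq, map_mul, map_ofNat]
    have hpm : ι (1 - X ^ (n+1)) = 1 - (ι X) ^ (n+1) := by rw [map_sub, map_one, map_pow]
    have hpp : ι (1 + X ^ (n+1)) = 1 + (ι X) ^ (n+1) := by rw [map_add, map_one, map_pow]
    rw [hQ, hB, hP, hpm, hpp]
    have h1 : ι (Qm n) ≠ 0 := ι_ne _ (constQ_ne n)
    have h2 : (1 - (ι X) ^ (n+1)) ≠ 0 := by
      rw [← hpm]; exact ι_ne _ (const_oneMinus (n+1) (by omega))
    field_simp
    ring
noncomputable def T (k m : ℕ) : PowerSeries ℚ :=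
  X ^ m * Pp (m + k) * Pp m * (Qm (m + k))⁻¹ * (Qm m)⁻¹

lemma ιX_pow_ne (j : ℕ) (hj : 1 ≤ j) : (1 - ι X ^ j : KK) ≠ 0 := by
  have := ι_ne _ (const_oneMinus j hj)
  rwa [map_sub, map_one, map_pow] at this

lemma step (k m : ℕ) :
    (1 + X ^ k) * T k m + X ^ k * (1 - X ^ (m+1)) * T k (m+1)
      = (1 + X ^ (k+1)) * T (k+1) m + X ^ k * (1 - X ^ m) * T k m := by
  have e1 : m + 1 + k = m + k + 1 := by omega
  have e2 : m + (k + 1) = m + k + 1 := by omega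
  unfold T
  rw [e1, e2]
  apply ι_inj
  simp only [map_add, map_mul, map_sub, map_one, map_pow,
    ι_inv _ (constQ_ne (m+k)), ι_inv _ (constQ_ne m),
    ι_inv _ (constQ_ne (m+k+1)), ι_inv _ (constQ_ne (m+1))]
  have hQ1 : ι (Qm (m+k+1)) = ι (Qm (m+k)) * (1 - ι X ^ (m+k+1)) := by
    rw [Qm_succ, map_mul, map_sub, map_one, map_pow]
  have hQ2 : ι (Qm (m+1)) = ι (Qm m) * (1 - ι X ^ (m+1)) := by
    rw [Qm_succ, map_mul, map_sub, map_one, map_pow]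
  have hP1 : ι (Pp (m+k+1)) = ι (Pp (m+k)) * (1 + ι X ^ (m+k)) := by
    rw [Pp_succ, map_mul, map_add, map_one, map_pow]
  have hP2 : ι (Pp (m+1)) = ι (Pp m) * (1 + ι X ^ m) := by
    rw [Pp_succ, map_mul, map_add, map_one, map_pow]
  rw [hQ1, hQ2, hP1, hP2]
  have h1 : ι (Qm (m+k)) ≠ 0 := ι_ne _ (constQ_ne _)
  have h2 : ι (Qm m) ≠ 0 := ι_ne _ (constQ_ne _)
  have h3 : (1 - ι X ^ (m+k+1) : KK) ≠ 0 := ιX_pow_ne _ (by omega)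
  have h4 : (1 - ι X ^ (m+1) : KK) ≠ 0 := ιX_pow_ne _ (by omega)
  field_simp
  ring
lemma inv_mul' (a b : PowerSeries ℚ) (ha : constantCoeff (R := ℚ) a ≠ 0) (hb : constantCoeff (R := ℚ) b ≠ 0) :
    (a * b)⁻¹ = a⁻¹ * b⁻¹ := by
  have hab : constantCoeff (R := ℚ) (a * b) ≠ 0 := by rw [map_mul]; exact mul_ne_zero ha hb
  apply ι_inj
  rw [map_mul, ι_inv _ ha, ι_inv _ hb, ι_inv _ hab, map_mul, mul_inv]

lemma inv_unfold (u : PowerSeries ℚ) (hu : constantCoeff (R := ℚ) u ≠ 0) :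
    u⁻¹ = 1 - (u - 1) * u⁻¹ := by
  have h : u * u⁻¹ = 1 := PowerSeries.mul_inv_cancel u hu
  calc u⁻¹ = u * u⁻¹ - (u - 1) * u⁻¹ := by ring
  _ = 1 - (u - 1) * u⁻¹ := by rw [h]

lemma coeff_hi (n j : ℕ) (hj : n < j) (w : PowerSeries ℚ) :
    coeff (R := ℚ) n (X ^ j * w) = 0 := by
  rw [mul_comm, PowerSeries.coeff_mul_X_pow' w j n, if_neg (by omega)]

lemma Pp_split (m B : ℕ) : ∃ e, Pp (m + B) = Pp B * (1 + X ^ B * e) := by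
  induction m with
  | zero => exact ⟨0, by simp⟩
  | succ m ih =>
    obtain ⟨e, he⟩ := ih
    refine ⟨e + X ^ m + X ^ B * e * X ^ m, ?_⟩
    have : m + 1 + B = (m + B) + 1 := by omega
    rw [this, Pp_succ, he, pow_add]
    ring

lemma Qm_split (m B : ℕ) : ∃ f, Qm (m + B) = Qm B * (1 + X ^ B * f) := by
  induction m with
  | zero => exact ⟨0, by simp⟩
  | succ m ih =>
    obtain ⟨f, hf⟩ := ih
    refine ⟨f - X ^ (m+1) - X ^ B * f * X ^ (m+1), ?_⟩
    have : m + 1 + B = (m + B) + 1 := by omega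
    rw [this, Qm_succ, hf]
    have : (m + B) + 1 = (m + 1) + B := by omega
    rw [this, pow_add]
    ring

lemma const_one_plus_hi (B : ℕ) (hB : 1 ≤ B) (f : PowerSeries ℚ) :
    constantCoeff (R := ℚ) (1 + X ^ B * f) = 1 := by
  rw [map_add, map_one, map_mul, map_pow, constantCoeff_X, zero_pow (by omega), zero_mul, add_zero]
/-- For `K ≥ 1`, the summand splits into the base part times `1 + X^K·w`. -/
lemma T_split (K m : ℕ) (hK : 1 ≤ K) :
    ∃ w, T K m = Pp K * (Qm K)⁻¹ * (X ^ m * Pp m * (Qm m)⁻¹) * (1 + X ^ K * w) := by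
  obtain ⟨e, he⟩ := Pp_split m K
  obtain ⟨f, hf⟩ := Qm_split m K
  have hQf : constantCoeff (R := ℚ) (1 + X ^ K * f) = 1 := const_one_plus_hi K hK f
  have hQf' : constantCoeff (R := ℚ) (1 + X ^ K * f) ≠ 0 := by rw [hQf]; norm_num
  have hinv : (Qm (m + K))⁻¹ = (Qm K)⁻¹ * (1 + X ^ K * f)⁻¹ := by
    rw [hf, inv_mul' _ _ (constQ_ne K) hQf']
  have hF : (1 + X ^ K * f)⁻¹ = 1 - X ^ K * (f * (1 + X ^ K * f)⁻¹) := by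
    have := inv_unfold _ hQf'
    calc (1 + X ^ K * f)⁻¹ = 1 - (1 + X ^ K * f - 1) * (1 + X ^ K * f)⁻¹ := this
    _ = 1 - X ^ K * (f * (1 + X ^ K * f)⁻¹) := by ring
  refine ⟨e * (1 + X ^ K * f)⁻¹ - f * (1 + X ^ K * f)⁻¹, ?_⟩
  unfold T
  rw [he, hinv]
  linear_combination (X ^ m * Pp K * Pp m * (Qm K)⁻¹ * (Qm m)⁻¹) * hF

/-- Large-index evaluation: summing the split summands. -/
lemma largeK (n K : ℕ) (hK : n + 1 ≤ K) :
    coeff (R := ℚ) n (∑ m ∈ Finset.range (n+1), T K m)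
      = coeff (R := ℚ) n (Pp K * (Qm K)⁻¹ * (Bq n * (Qm n)⁻¹)) := by
  have h : ∀ m ∈ Finset.range (n+1),
      coeff (R := ℚ) n (T K m) = coeff (R := ℚ) n (Pp K * (Qm K)⁻¹ * (X ^ m * Pp m * (Qm m)⁻¹)) := by
    intro m _
    obtain ⟨w, hw⟩ := T_split K m (by omega)
    rw [hw, mul_add, mul_one]
    rw [map_add]
    have : coeff (R := ℚ) n (Pp K * (Qm K)⁻¹ * (X ^ m * Pp m * (Qm m)⁻¹) * (X ^ K * w)) = 0 := by
      have heq : Pp K * (Qm K)⁻¹ * (X ^ m * Pp m * (Qm m)⁻¹) * (X ^ K * w)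
          = X ^ K * (Pp K * (Qm K)⁻¹ * (X ^ m * Pp m * (Qm m)⁻¹) * w) := by ring
      rw [heq]
      exact coeff_hi n K (by omega) _
    rw [this, add_zero]
  rw [map_sum, Finset.sum_congr rfl h, ← map_sum, ← Finset.mul_sum, qbinom]
lemma teleC (k M : ℕ) :
    (1 + X ^ k) * ∑ m ∈ Finset.range (M+1), T k m + X ^ k * (1 - X ^ (M+1)) * T k (M+1)
      = (1 + X ^ (k+1)) * ∑ m ∈ Finset.range (M+1), T (k+1) m := by
  induction M with
  | zero =>
    simp only [Nat.zero_add, Finset.sum_range_one]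
    have h := step k 0
    rw [pow_zero, sub_self, mul_zero, zero_mul, add_zero] at h
    simpa using h
  | succ M ih =>
    rw [Finset.sum_range_succ, Finset.sum_range_succ (fun m => T (k+1) m)]
    have h := step k (M+1)
    linear_combination ih + h

lemma coeff_T_hi (n c m : ℕ) (h : n < m) : coeff (R := ℚ) n (T c m) = 0 := by
  have : T c m = X ^ m * (Pp (m + c) * Pp m * (Qm (m + c))⁻¹ * (Qm m)⁻¹) := by
    unfold T; ring
  rw [this]
  exact coeff_hi n m h _

lemma keyStep (n c : ℕ) :
    coeff (R := ℚ) n ((1 + X ^ c) * ∑ m ∈ Finset.range (n+1), T c m)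
      = coeff (R := ℚ) n ((1 + X ^ (c+1)) * ∑ m ∈ Finset.range (n+1), T (c+1) m) := by
  have h := teleC c n
  have h2 : coeff (R := ℚ) n (X ^ c * (1 - X ^ (n+1)) * T c (n+1)) = 0 := by
    have : X ^ c * (1 - X ^ (n+1)) * T c (n+1)
        = X ^ (n+1) * (X ^ c * (1 - X ^ (n+1)) * (Pp (n+1+c) * Pp (n+1) * (Qm (n+1+c))⁻¹ * (Qm (n+1))⁻¹)) := by
      unfold T; ring
    rw [this]
    exact coeff_hi n (n+1) (by omega) _
  calc coeff (R := ℚ) n ((1 + X ^ c) * ∑ m ∈ Finset.range (n+1), T c m)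
      = coeff (R := ℚ) n ((1 + X ^ c) * ∑ m ∈ Finset.range (n+1), T c m
          + X ^ c * (1 - X ^ (n+1)) * T c (n+1)) := by rw [map_add, h2, add_zero]
    _ = _ := by rw [h]

lemma keyIter (n k j : ℕ) :
    coeff (R := ℚ) n ((1 + X ^ k) * ∑ m ∈ Finset.range (n+1), T k m)
      = coeff (R := ℚ) n ((1 + X ^ (k+j)) * ∑ m ∈ Finset.range (n+1), T (k+j) m) := by
  induction j with
  | zero => rfl
  | succ j ih => rw [ih, ← Nat.add_assoc]; exact keyStep n (k+j)
lemma prod_range_plus (N : ℕ) : ∏ i ∈ Finset.range N, (1 + X ^ (i+1) : PowerSeries ℚ) = Bq N := by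
  induction N with
  | zero => simp [Bq]
  | succ N ih => rw [Finset.prod_range_succ, ih, Bq_succ]

lemma prod_range_minus (N : ℕ) : ∏ i ∈ Finset.range N, (1 - X ^ (i+1) : PowerSeries ℚ) = Qm N := by
  induction N with
  | zero => simp [Qm]
  | succ N ih => rw [Finset.prod_range_succ, ih, Qm_succ]

lemma prod_range_minus_inv (N : ℕ) :
    ∏ i ∈ Finset.range N, ((1 - X ^ (i+1) : PowerSeries ℚ))⁻¹ = (Qm N)⁻¹ := by
  induction N with
  | zero => simp [Qm]
  | succ N ih =>
    rw [Finset.prod_range_succ, ih, Qm_succ,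
      inv_mul' _ _ (constQ_ne N) (const_oneMinus (N+1) (by omega))]

lemma stab (f : ℕ → PowerSeries ℚ) (h : ∀ i, ∃ w, f i = 1 + X ^ (i+1) * w) (n N : ℕ)
    (hN : n + 1 ≤ N) :
    coeff (R := ℚ) n (∏ i ∈ Finset.range N, f i) = coeff (R := ℚ) n (∏ i ∈ Finset.range (n+1), f i) := by
  induction N, hN using Nat.le_induction with
  | base => rfl
  | succ N hN ih =>
    rw [Finset.prod_range_succ]
    obtain ⟨w, hw⟩ := h N
    rw [hw, mul_add, mul_one, map_add]
    have : (∏ i ∈ Finset.range N, f i) * (X ^ (N+1) * w)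
        = X ^ (N+1) * ((∏ i ∈ Finset.range N, f i) * w) := by ring
    rw [this, coeff_hi n (N+1) (by omega), add_zero, ih]

lemma sq_plus_hi (i : ℕ) : ∃ w, ((1 + X ^ (i+1) : PowerSeries ℚ)) ^ 2 = 1 + X ^ (i+1) * w :=
  ⟨2 + X ^ (i+1), by ring⟩

lemma inv_oneMinus_unfold (j : ℕ) (hj : 1 ≤ j) :
    ((1 - X ^ j : PowerSeries ℚ))⁻¹ = 1 + X ^ j * (1 - X ^ j : PowerSeries ℚ)⁻¹ := by
  have h := inv_unfold _ (const_oneMinus j hj)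
  calc ((1 - X ^ j : PowerSeries ℚ))⁻¹ = 1 - (1 - X ^ j - 1) * (1 - X ^ j : PowerSeries ℚ)⁻¹ := h
  _ = 1 + X ^ j * (1 - X ^ j : PowerSeries ℚ)⁻¹ := by ring

lemma sq_minus_hi (i : ℕ) :
    ∃ w, (((1 - X ^ (i+1) : PowerSeries ℚ))⁻¹) ^ 2 = 1 + X ^ (i+1) * w := by
  refine ⟨(1 - X ^ (i+1) : PowerSeries ℚ)⁻¹ + ((1 - X ^ (i+1) : PowerSeries ℚ)⁻¹) ^ 2, ?_⟩
  have h := inv_oneMinus_unfold (i+1) (by omega)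
  linear_combination ((1 - X ^ (i+1) : PowerSeries ℚ)⁻¹ + 1) * h

noncomputable def P1 : PowerSeries ℚ := PowerSeries.mk fun d => coeff (R := ℚ) d (Bq (d+1) ^ 2)
noncomputable def P2 : PowerSeries ℚ := PowerSeries.mk fun d => coeff (R := ℚ) d (((Qm (d+1))⁻¹) ^ 2)

lemma coeff_P1 (n j : ℕ) (hj : j ≤ n) : coeff (R := ℚ) j P1 = coeff (R := ℚ) j (Bq (n+1) ^ 2) := by
  have h1 : ∀ N, ∏ i ∈ Finset.range N, ((1 + X ^ (i+1) : PowerSeries ℚ)) ^ 2 = Bq N ^ 2 := by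
    intro N; rw [Finset.prod_pow, prod_range_plus]
  have h2 := stab (fun i => ((1 + X ^ (i+1) : PowerSeries ℚ)) ^ 2) sq_plus_hi j (n+1) (by omega)
  rw [h1, h1] at h2
  simp only [P1, coeff_mk]
  exact h2.symm

lemma coeff_P2 (n j : ℕ) (hj : j ≤ n) : coeff (R := ℚ) j P2 = coeff (R := ℚ) j (((Qm (n+1))⁻¹) ^ 2) := by
  have h1 : ∀ N, ∏ i ∈ Finset.range N, (((1 - X ^ (i+1) : PowerSeries ℚ))⁻¹) ^ 2
      = ((Qm N)⁻¹) ^ 2 := by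
    intro N; rw [Finset.prod_pow, prod_range_minus_inv]
  have h2 := stab (fun i => (((1 - X ^ (i+1) : PowerSeries ℚ))⁻¹) ^ 2) sq_minus_hi j (n+1) (by omega)
  rw [h1, h1] at h2
  simp only [P2, coeff_mk]
  exact h2.symm

lemma coeff_mul_congr (n : ℕ) (f f' g g' : PowerSeries ℚ)
    (hf : ∀ j ≤ n, coeff (R := ℚ) j f = coeff (R := ℚ) j f') (hg : ∀ j ≤ n, coeff (R := ℚ) j g = coeff (R := ℚ) j g') :
    coeff (R := ℚ) n (f * g) = coeff (R := ℚ) n (f' * g') := by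
  rw [PowerSeries.coeff_mul, PowerSeries.coeff_mul]
  apply Finset.sum_congr rfl
  intro p hp
  rw [Finset.HasAntidiagonal.mem_antidiagonal] at hp
  rw [hf p.1 (by omega), hg p.2 (by omega)]
lemma PQ_split (a B : ℕ) (hB : 1 ≤ B) :
    ∃ w, Pp (a + B) * (Qm (a + B))⁻¹ = Pp B * (Qm B)⁻¹ * (1 + X ^ B * w) := by
  obtain ⟨e, he⟩ := Pp_split a B
  obtain ⟨f, hf⟩ := Qm_split a B
  have hQf' : constantCoeff (R := ℚ) (1 + X ^ B * f) ≠ 0 := by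
    rw [const_one_plus_hi B hB f]; norm_num
  have hinv : (Qm (a + B))⁻¹ = (Qm B)⁻¹ * (1 + X ^ B * f)⁻¹ := by
    rw [hf, inv_mul' _ _ (constQ_ne B) hQf']
  have hF : (1 + X ^ B * f)⁻¹ = 1 - X ^ B * (f * (1 + X ^ B * f)⁻¹) := by
    have h := inv_unfold _ hQf'
    calc (1 + X ^ B * f)⁻¹ = 1 - (1 + X ^ B * f - 1) * (1 + X ^ B * f)⁻¹ := h
    _ = 1 - X ^ B * (f * (1 + X ^ B * f)⁻¹) := by ring
  refine ⟨e * (1 + X ^ B * f)⁻¹ - f * (1 + X ^ B * f)⁻¹, ?_⟩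
  rw [he, hinv]
  linear_combination (Pp B * (Qm B)⁻¹) * hF

lemma cmp (n a : ℕ) :
    coeff (R := ℚ) n (Pp (a + (n+1)) * (Qm (a + (n+1)))⁻¹ * (Bq n * (Qm n)⁻¹))
      = coeff (R := ℚ) n (2 * Bq (n+1) ^ 2 * ((Qm (n+1))⁻¹) ^ 2) := by
  obtain ⟨w, hw⟩ := PQ_split a (n+1) (by omega)
  set g := (1 - X ^ (n+1) : PowerSeries ℚ)⁻¹ with hgdef
  have hg : g = 1 + X ^ (n+1) * g := inv_oneMinus_unfold (n+1) (by omega)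
  have hq : (Qm (n+1))⁻¹ = (Qm n)⁻¹ * g := by
    rw [Qm_succ, inv_mul' _ _ (constQ_ne n) (const_oneMinus (n+1) (by omega))]
  set C := 2 * Bq n ^ 2 * ((Qm n)⁻¹) ^ 2 * g with hC
  have hA : Pp (a + (n+1)) * (Qm (a + (n+1)))⁻¹ * (Bq n * (Qm n)⁻¹)
      = C + X ^ (n+1) * (C * w) := by
    rw [hw, hq, Pp_eq_two_Bq]; ring
  have hB : 2 * Bq (n+1) ^ 2 * ((Qm (n+1))⁻¹) ^ 2
      = C + X ^ (n+1) * (C * (3 * g + X ^ (n+1) * g)) := by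
    rw [Bq_succ, hq]
    linear_combination C * hg
  rw [hA, hB, map_add, map_add, coeff_hi n (n+1) (by omega), coeff_hi n (n+1) (by omega)]
lemma coeff_two_mul (n : ℕ) (x : PowerSeries ℚ) : coeff (R := ℚ) n (2 * x) = 2 * coeff (R := ℚ) n x := by
  have h : (2 : PowerSeries ℚ) * x = x + x := by ring
  rw [h, map_add]; ring

lemma sum_trunc (c d N : ℕ) (h : d + 1 ≤ N) :
    coeff (R := ℚ) d (∑ m ∈ Finset.range N, T c m)
      = coeff (R := ℚ) d (∑ m ∈ Finset.range (d+1), T c m) := by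
  induction N, h using Nat.le_induction with
  | base => rfl
  | succ N hN ih =>
    rw [Finset.sum_range_succ, map_add, coeff_T_hi d c N (by omega), add_zero, ih]

lemma main (k : ℕ) : ∀ n : ℕ, coeff (R := ℚ) n (∑ m ∈ Finset.range (n+1), T k m)
    = coeff (R := ℚ) n (2 * (1 + X ^ k : PowerSeries ℚ)⁻¹ * P1 * P2) := by
  intro n
  induction n using Nat.strong_induction_on with
  | _ n ih =>
  set S : PowerSeries ℚ := 2 * (1 + X ^ k : PowerSeries ℚ)⁻¹ * P1 * P2 with hS
  set PS : PowerSeries ℚ := ∑ m ∈ Finset.range (n+1), T k m with hPS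
  -- step 1: multiply by (1 + X^k) and move to large K
  have h1 : coeff (R := ℚ) n ((1 + X ^ k) * PS)
      = coeff (R := ℚ) n ((1 + X ^ (k + (n+1))) * ∑ m ∈ Finset.range (n+1), T (k + (n+1)) m) :=
    keyIter n k (n+1)
  have h1b : coeff (R := ℚ) n ((1 + X ^ (k + (n+1))) * ∑ m ∈ Finset.range (n+1), T (k + (n+1)) m)
      = coeff (R := ℚ) n (∑ m ∈ Finset.range (n+1), T (k + (n+1)) m) := by
    have he : (1 + X ^ (k + (n+1))) * (∑ m ∈ Finset.range (n+1), T (k + (n+1)) m)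
        = (∑ m ∈ Finset.range (n+1), T (k + (n+1)) m)
          + X ^ (k + (n+1)) * (∑ m ∈ Finset.range (n+1), T (k + (n+1)) m) := by ring
    rw [he, map_add, coeff_hi n (k + (n+1)) (by omega), add_zero]
  have h2 : coeff (R := ℚ) n (∑ m ∈ Finset.range (n+1), T (k + (n+1)) m)
      = coeff (R := ℚ) n (Pp (k + (n+1)) * (Qm (k + (n+1)))⁻¹ * (Bq n * (Qm n)⁻¹)) :=
    largeK n (k + (n+1)) (by omega)
  have h3 := cmp n k
  have h4 : coeff (R := ℚ) n (2 * Bq (n+1) ^ 2 * ((Qm (n+1))⁻¹) ^ 2) = coeff (R := ℚ) n (2 * (P1 * P2)) := by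
    have ha : 2 * Bq (n+1) ^ 2 * ((Qm (n+1))⁻¹) ^ 2 = 2 * (Bq (n+1) ^ 2 * ((Qm (n+1))⁻¹) ^ 2) := by
      ring
    rw [ha, coeff_two_mul, coeff_two_mul]
    congr 1
    exact coeff_mul_congr n _ P1 _ P2 (fun j hj => (coeff_P1 n j hj).symm)
      (fun j hj => (coeff_P2 n j hj).symm)
  have h5 : (1 + X ^ k) * S = 2 * (P1 * P2) := by
    have hc : (1 + X ^ k : PowerSeries ℚ) * (1 + X ^ k : PowerSeries ℚ)⁻¹ = 1 :=
      PowerSeries.mul_inv_cancel _ (const_onePlus k)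
    rw [hS]
    linear_combination (2 * P1 * P2) * hc
  have hz : coeff (R := ℚ) n ((1 + X ^ k) * (PS - S)) = 0 := by
    have he : (1 + X ^ k) * (PS - S) = (1 + X ^ k) * PS - (1 + X ^ k) * S := by ring
    rw [he, map_sub, h1, h1b, h2, h3, h4, h5, sub_self]
  have hsplit : coeff (R := ℚ) n (PS - S) + coeff (R := ℚ) n ((PS - S) * X ^ k) = 0 := by
    have he : (1 + X ^ k) * (PS - S) = (PS - S) + (PS - S) * X ^ k := by ring
    rw [he, map_add] at hz
    exact hz
  have hfinal : coeff (R := ℚ) n (PS - S) = 0 := by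
    rcases Nat.eq_zero_or_pos k with hk | hk
    · subst hk
      rw [pow_zero, mul_one] at hsplit
      linarith [hsplit]
    · rw [PowerSeries.coeff_mul_X_pow'] at hsplit
      by_cases hkn : k ≤ n
      · rw [if_pos hkn] at hsplit
        have hd : n - k < n := by omega
        have htr : coeff (R := ℚ) (n - k) PS = coeff (R := ℚ) (n - k) (∑ m ∈ Finset.range ((n-k)+1), T k m) := by
          rw [hPS]
          exact sum_trunc k (n - k) (n+1) (by omega)
        have : coeff (R := ℚ) (n - k) (PS - S) = 0 := by
          rw [map_sub, htr, ih (n - k) hd, sub_self]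
        rw [this, add_zero] at hsplit
        exact hsplit
      · rw [if_neg hkn, add_zero] at hsplit
        exact hsplit
  have := map_sub (coeff (R := ℚ) n) PS S
  rw [hfinal] at this
  linarith [this.symm]

theorem stmt17 (k : ℕ) :
    ∃ S P₁ P₂ : PowerSeries ℚ,
      CoeffwiseSum (summand k) S ∧
      CoeffwiseProd (fun i : ℕ => (1 + X ^ (i + 1)) ^ 2) P₁ ∧
      CoeffwiseProd (fun i : ℕ => ((1 - X ^ (i + 1) : PowerSeries ℚ)⁻¹) ^ 2) P₂ ∧
      S = 2 * (1 + X ^ k : PowerSeries ℚ)⁻¹ * P₁ * P₂ := by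
  refine ⟨2 * (1 + X ^ k : PowerSeries ℚ)⁻¹ * P1 * P2, P1, P2, ?_, ?_, ?_, rfl⟩
  · intro n
    rw [Filter.eventually_atTop]
    refine ⟨n + 1, fun N hN => ?_⟩
    have hsum : ∀ m : ℕ, summand k m = T k m := fun m => rfl
    calc coeff (R := ℚ) n (∑ m ∈ Finset.range N, summand k m)
        = coeff (R := ℚ) n (∑ m ∈ Finset.range N, T k m) := by simp only [hsum]
      _ = coeff (R := ℚ) n (∑ m ∈ Finset.range (n+1), T k m) := sum_trunc k n N hN
      _ = _ := main k n
  · intro n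
    rw [Filter.eventually_atTop]
    refine ⟨n + 1, fun N hN => ?_⟩
    rw [stab _ sq_plus_hi n N hN]
    have h1 : ∏ i ∈ Finset.range (n+1), ((1 + X ^ (i+1) : PowerSeries ℚ)) ^ 2 = Bq (n+1) ^ 2 := by
      rw [Finset.prod_pow, prod_range_plus]
    rw [h1]
    simp [P1]
  · intro n
    rw [Filter.eventually_atTop]
    refine ⟨n + 1, fun N hN => ?_⟩
    rw [stab _ sq_minus_hi n N hN]
    have h1 : ∏ i ∈ Finset.range (n+1), (((1 - X ^ (i+1) : PowerSeries ℚ))⁻¹) ^ 2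
        = ((Qm (n+1))⁻¹) ^ 2 := by
      rw [Finset.prod_pow, prod_range_minus_inv]
    rw [h1]
    simp [P2]

end Stmt17
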